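/- arXiv:2506.23695 — 5 statements merged into one kernel-verified Lean document; each statement's English description precedes it below -/
import Mathlib

section
/- If w : [0,∞) → [0,∞) is a weight function (non-decreasing, unbounded, continuous) and the weight function system W_w = (w(N·t))_{N∈ℕ} satisfies condition (ω), then w satisfies condition (α): there exist C > 0 and A > 1 such that w(2t) ≤ C·w(t) + log A for all t ≥ 0. -/
/-- If `w` is a weight function (non-decreasing, unbounded, continuous on `[0,∞)`)
and the weight function system `W_w = (w(N·t))` satisfies condition (ω),
then `w` satisfies condition (α). -/
theorem stmt_0 (w : ℝ → ℝ)
    (hw_nonneg : ∀ t ≥ (0:ℝ), 0 ≤ w t)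
    (hw_mono : MonotoneOn w (Set.Ici (0:ℝ)))
    (hw_cont : ContinuousOn w (Set.Ici (0:ℝ)))
    (hw_unbdd : ∀ B : ℝ, ∃ t ≥ (0:ℝ), B < w t)
    (hω : ∀ N : ℕ, ∃ M : ℕ, N ≤ M ∧ ∀ K : ℕ, M ≤ K →
      ∃ θ C : ℝ, θ ∈ Set.Ioo (0:ℝ) 1 ∧ 1 < C ∧
        ∀ t ≥ (0:ℝ), (1 - θ) * w (N * t) + θ * w (K * t) ≤ w (M * t) + Real.log C) :
    ∃ C > (0:ℝ), ∃ A > (1:ℝ), ∀ t ≥ (0:ℝ), w (2 * t) ≤ C * w t + Real.log A := by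
  obtain ⟨M, hM1, hK⟩ := hω 1
  obtain ⟨θ, C, ⟨hθ0, hθ1⟩, hC1, hineq⟩ := hK (2 * M) (by omega)
  have hC0 : (0:ℝ) < C := by linarith
  refine ⟨1/θ, by positivity, C ^ (1/θ : ℝ), ?_, ?_⟩
  · exact Real.one_lt_rpow_iff_of_pos hC0 |>.mpr (Or.inl ⟨hC1, by positivity⟩)
  · intro t ht
    have hM0 : (0:ℝ) < (M:ℝ) := by exact_mod_cast Nat.lt_of_lt_of_le Nat.zero_lt_one hM1
    set s := t / M with hs_def
    have hs : 0 ≤ s := div_nonneg ht hM0.le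
    have h := hineq s hs
    have e1 : ((2 * M : ℕ) : ℝ) * s = 2 * t := by
      push_cast; rw [hs_def]; field_simp [hM0.ne']
    have e2 : (M:ℝ) * s = t := by rw [hs_def]; field_simp [hM0.ne']
    have e3 : ((1:ℕ):ℝ) * s = s := by norm_num
    rw [e1, e2, e3] at h
    have hnn : 0 ≤ w s := hw_nonneg s hs
    rw [Real.log_rpow hC0]
    have key : θ * w (2 * t) ≤ w t + Real.log C := by nlinarith
    have : w (2 * t) ≤ (w t + Real.log C) / θ := by
      rw [le_div_iff₀ hθ0]; linarith [mul_comm θ (w (2*t))]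
    calc w (2*t) ≤ (w t + Real.log C) / θ := this
      _ = 1/θ * w t + 1/θ * Real.log C := by ring
end

section
/- If a weight function w satisfies both (α) (∃ C>0, A>1 with w(2t) ≤ C·w(t) + log A for all t ≥ 0) and (δ) (∃ C>0, A>1 with 2·w(t) ≤ w(Ct) + log A for all t ≥ 0), then the weight function system W_w = (w(Nt))_{N∈ℕ} satisfies condition (ω). -/
/-- Iterating condition (α): bound `w (2^j * s)` by `E * w s + D`. -/
lemma alpha_iter (w : ℝ → ℝ) (hw_nonneg : ∀ t ≥ (0:ℝ), 0 ≤ w t)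
    (Cα : ℝ) (hCα : 0 < Cα) (Aα : ℝ) (hAα : 1 < Aα)
    (hα : ∀ t ≥ (0:ℝ), w (2 * t) ≤ Cα * w t + Real.log Aα) (j : ℕ) :
    ∃ E ≥ (1:ℝ), ∃ D ≥ (0:ℝ), ∀ s ≥ (0:ℝ), w ((2:ℝ) ^ j * s) ≤ E * w s + D := by
  induction j with
  | zero => exact ⟨1, le_refl 1, 0, le_refl 0, fun s hs => by simp⟩
  | succ j ih =>
    obtain ⟨E, hE, D, hD, h⟩ := ih
    have hlA : 0 ≤ Real.log Aα := Real.log_nonneg hAα.le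
    refine ⟨Cα * E + 1, by nlinarith, Cα * D + Real.log Aα, by positivity, fun s hs => ?_⟩
    have h1 : (2:ℝ) ^ (j + 1) * s = 2 * ((2:ℝ) ^ j * s) := by ring
    have h2 : (0:ℝ) ≤ (2:ℝ) ^ j * s := by positivity
    have h3 := hα ((2:ℝ) ^ j * s) h2
    have h4 := h s hs
    have h5 := hw_nonneg s hs
    rw [h1]
    nlinarith

/-- If a weight function `w` satisfies (α) and (δ), then the weight function
system `W_w = (w(N·t))` satisfies condition (ω). -/
theorem stmt_2 (w : ℝ → ℝ)
    (hw_nonneg : ∀ t ≥ (0:ℝ), 0 ≤ w t)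
    (hw_mono : MonotoneOn w (Set.Ici (0:ℝ)))
    (hw_cont : ContinuousOn w (Set.Ici (0:ℝ)))
    (hw_unbdd : ∀ B : ℝ, ∃ t ≥ (0:ℝ), B < w t)
    (hα : ∃ C > (0:ℝ), ∃ A > (1:ℝ), ∀ t ≥ (0:ℝ), w (2 * t) ≤ C * w t + Real.log A)
    (hδ : ∃ C > (0:ℝ), ∃ A > (1:ℝ), ∀ t ≥ (0:ℝ), 2 * w t ≤ w (C * t) + Real.log A) :
    ∀ N : ℕ, ∃ M : ℕ, N ≤ M ∧ ∀ K : ℕ, M ≤ K →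
      ∃ θ C : ℝ, θ ∈ Set.Ioo (0:ℝ) 1 ∧ 1 < C ∧
        ∀ t ≥ (0:ℝ), (1 - θ) * w (N * t) + θ * w (K * t) ≤ w (M * t) + Real.log C := by
  obtain ⟨Cα, hCα, Aα, hAα, hα'⟩ := hα
  obtain ⟨Cδ, hCδ, Aδ, hAδ, hδ'⟩ := hδ
  intro N
  refine ⟨N * ⌈Cδ⌉₊ + 1, ?_, ?_⟩
  · have : 1 ≤ ⌈Cδ⌉₊ := Nat.one_le_ceil_iff.mpr hCδ
    nlinarith
  intro K hK
  set M : ℕ := N * ⌈Cδ⌉₊ + 1 with hM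
  obtain ⟨E, hE, D, hD, hED⟩ := alpha_iter w hw_nonneg Cα hCα Aα hAα hα' K
  have hlAδ : 0 ≤ Real.log Aδ := Real.log_nonneg hAδ.le
  refine ⟨1 / (2 * (E + 1)), Aδ * Real.exp D, ⟨by positivity, ?_⟩, ?_, ?_⟩
  · rw [div_lt_one (by positivity)]; nlinarith
  · have : (1:ℝ) ≤ Real.exp D := by
      rw [show (1:ℝ) = Real.exp 0 by simp]; exact Real.exp_le_exp.mpr hD
    nlinarith
  intro t ht
  have hlogC : Real.log (Aδ * Real.exp D) = Real.log Aδ + D := by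
    rw [Real.log_mul (by positivity) (by positivity), Real.log_exp]
  rw [hlogC]
  -- bound w (N t) via (δ) and monotonicity
  have hNt : (0:ℝ) ≤ N * t := by positivity
  have hMt : (0:ℝ) ≤ M * t := by positivity
  have hCNM : Cδ * (N * t) ≤ M * t := by
    have h1 : Cδ ≤ (⌈Cδ⌉₊ : ℝ) := Nat.le_ceil Cδ
    have h2 : Cδ * N ≤ (M:ℝ) := by
      have : (M:ℝ) = N * ⌈Cδ⌉₊ + 1 := by push_cast [hM]; ring
      nlinarith
    nlinarith
  have h1 : 2 * w (N * t) ≤ w (M * t) + Real.log Aδ := by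
    have := hδ' (N * t) hNt
    have hm := hw_mono (Set.mem_Ici.mpr (by positivity : (0:ℝ) ≤ Cδ * (N * t)))
      (Set.mem_Ici.mpr hMt) hCNM
    linarith
  -- bound w (K t) via iterated (α) and monotonicity
  have hK2 : (K:ℝ) * t ≤ (2:ℝ) ^ K * ((M:ℝ) * t) := by
    have h2K : (K:ℝ) ≤ (2:ℝ) ^ K := by
      exact_mod_cast (Nat.lt_two_pow_self (n := K)).le
    have hM1 : (1:ℝ) ≤ (M:ℝ) := by exact_mod_cast Nat.one_le_iff_ne_zero.mpr (by simp [hM])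
    have hKM : (K:ℝ) ≤ (2:ℝ) ^ K * (M:ℝ) := by nlinarith
    calc (K:ℝ) * t ≤ ((2:ℝ) ^ K * (M:ℝ)) * t := mul_le_mul_of_nonneg_right hKM ht
      _ = (2:ℝ) ^ K * ((M:ℝ) * t) := by ring
  have h2 : w (K * t) ≤ E * w (M * t) + D := by
    have hm := hw_mono (Set.mem_Ici.mpr (by positivity : (0:ℝ) ≤ (K:ℝ) * t))
      (Set.mem_Ici.mpr (by positivity : (0:ℝ) ≤ (2:ℝ) ^ K * ((M:ℝ) * t))) hK2
    have := hED ((M:ℝ) * t) hMt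
    linarith
  have h3 : 0 ≤ w (M * t) := hw_nonneg _ hMt
  have h4 : 0 ≤ w (N * t) := hw_nonneg _ hNt
  have hθ : (0:ℝ) < 1 / (2 * (E + 1)) := by positivity
  have hθ1 : 1 / (2 * (E + 1)) * (E + 1) = 1 / 2 := by
    field_simp
  nlinarith [mul_nonneg hθ.le h3, mul_nonneg hθ.le hD]
end

section
/- Generalized three-sets Hadamard theorem: let Ω₁, Ω₂, Ω₃ be relatively compact open subsets of ℂ with Ω₁ nonempty, Ω₁ ⊆ Ω₂, closure(Ω₂) ⊆ Ω₃, and Ω₃ simply connected. Then there exists θ ∈ (0,1) such that for every holomorphic function f on Ω₃, sup_{z∈Ω₂} |f(z)| ≤ (sup_{z∈Ω₁} |f(z)|)^θ · (sup_{z∈Ω₃} |f(z)|)^{1−θ}. -/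
open Real Metric Complex


lemma sup2_nonneg (S : Set ℂ) (f : ℂ → ℂ) : 0 ≤ ⨆ z ∈ S, ‖f z‖ :=
  Real.iSup_nonneg fun z => Real.iSup_nonneg fun _ => norm_nonneg _

lemma sup2_le {S : Set ℂ} {f : ℂ → ℂ} {C : ℝ} (hC : 0 ≤ C) (h : ∀ z ∈ S, ‖f z‖ ≤ C) :
    (⨆ z ∈ S, ‖f z‖) ≤ C := by
  refine Real.iSup_le (fun z => ?_) hC
  by_cases hz : z ∈ S
  · simp only [ciSup_pos hz]; exact h z hz
  · haveI : IsEmpty (z ∈ S) := ⟨hz⟩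
    exact le_trans (le_of_eq (Real.iSup_of_isEmpty _)) hC

lemma le_sup2 {S : Set ℂ} {f : ℂ → ℂ} {C : ℝ} (h : ∀ z ∈ S, ‖f z‖ ≤ C) {z : ℂ} (hz : z ∈ S) :
    ‖f z‖ ≤ ⨆ z ∈ S, ‖f z‖ := by
  have hb : BddAbove (Set.range fun z => ⨆ _ : z ∈ S, ‖f z‖) := by
    refine ⟨max C 0, ?_⟩
    rintro _ ⟨w, rfl⟩
    by_cases hw : w ∈ S
    · simp only [ciSup_pos hw]; exact le_max_of_le_left (h w hw)
    · haveI : IsEmpty (w ∈ S) := ⟨hw⟩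
      simp only [Real.iSup_of_isEmpty]
      exact le_max_right _ _
  have h1 : ‖f z‖ = ⨆ _ : z ∈ S, ‖f z‖ := by rw [ciSup_pos hz]
  exact h1.le.trans (le_ciSup hb z)

lemma mono_rpow {m M t t' : ℝ} (hm0 : 0 ≤ m) (hmM : m ≤ M) (hM0 : 0 < M)
    (ht0 : 0 ≤ t) (htt' : t ≤ t') (ht'1 : t' ≤ 1) :
    m ^ t' * M ^ (1 - t') ≤ m ^ t * M ^ (1 - t) := by
  rcases hm0.eq_or_lt with h | h
  · rcases eq_or_lt_of_le (ht0.trans htt') with h' | h'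
    · obtain rfl : t = t' := le_antisymm htt' (h' ▸ ht0)
      exact le_refl _
    · rw [← h, Real.zero_rpow (ne_of_gt h')]
      have : (0:ℝ) ≤ (0:ℝ) ^ t * M ^ (1 - t) := by positivity
      simpa using this
  · have h1 : m ^ t' = m ^ t * m ^ (t' - t) := by
      rw [← Real.rpow_add h]; ring_nf
    have h2 : M ^ (1 - t) = M ^ (1 - t') * M ^ (t' - t) := by
      rw [← Real.rpow_add hM0]; ring_nf
    rw [h1, h2]
    have key : m ^ (t' - t) ≤ M ^ (t' - t) :=
      Real.rpow_le_rpow hm0 hmM (sub_nonneg.2 htt')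
    calc m ^ t * m ^ (t' - t) * M ^ (1 - t')
        ≤ m ^ t * M ^ (t' - t) * M ^ (1 - t') := by gcongr <;> positivity
      _ = m ^ t * (M ^ (1 - t') * M ^ (t' - t)) := by ring

lemma threeCircles {Ω : Set ℂ} {f : ℂ → ℂ} (hf : DifferentiableOn ℂ f Ω)
    {a : ℂ} {r ρ R m M : ℝ} (hr : 0 < r) (hrρ : r ≤ ρ) (hρR : ρ ≤ R) (hrR : r < R)
    (hΩo : IsOpen Ω) (hsub : Metric.closedBall a R ⊆ Ω)
    (hm0 : 0 ≤ m) (hmM : m ≤ M) (hM0 : 0 < M)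
    (hm : ∀ z ∈ Metric.sphere a r, ‖f z‖ ≤ m)
    (hM : ∀ z ∈ Metric.closedBall a R, ‖f z‖ ≤ M)
    {z : ℂ} (hz : z ∈ Metric.closedBall a ρ) :
    ‖f z‖ ≤ m ^ (Real.log (R/ρ) / Real.log (R/r)) * M ^ (1 - Real.log (R/ρ) / Real.log (R/r)) := by
  have hR : 0 < R := hr.trans hrR
  have hρ : 0 < ρ := hr.trans_le hrρ
  set s : ℝ := Real.log (R / r) with hs_def
  have hs : 0 < s := Real.log_pos ((one_lt_div hr).2 hrR)
  set t : ℝ := Real.log (R / ρ) / s with ht_def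
  have ht0 : 0 ≤ t := div_nonneg (Real.log_nonneg ((one_le_div hρ).2 hρR)) hs.le
  have ht1 : t ≤ 1 := by
    rw [div_le_one hs]
    have : R / ρ ≤ R / r := by gcongr
    exact Real.log_le_log (by positivity) this
  -- the exponential map from the strip to the annulus
  set φ : ℂ → ℂ := fun w => a + (R : ℂ) * Complex.exp (-(s : ℂ) * w) with hφ_def
  have hrad : ∀ w : ℂ, dist (φ w) a = R * Real.exp (-s * w.re) := by
    intro w
    simp only [hφ_def, Complex.dist_eq, add_sub_cancel_left, norm_mul, Complex.norm_exp,
      Complex.norm_real, Real.norm_eq_abs, abs_of_pos hR]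
    congr 1
    simp
  have hexpneg : Real.exp (-s) = r / R := by
    rw [Real.exp_neg, hs_def, Real.exp_log (by positivity)]
    field_simp
  have hmap : ∀ w ∈ Complex.re ⁻¹' Set.Icc (0:ℝ) 1, φ w ∈ Metric.closedBall a R := by
    intro w hw
    rw [Metric.mem_closedBall, hrad]
    calc R * Real.exp (-s * w.re) ≤ R * 1 := by
          gcongr
          · exact Real.exp_le_one_iff.2 (by nlinarith [hw.1])
      _ = R := mul_one R
  have hφdiff : Differentiable ℂ φ := by
    apply Differentiable.const_add
    exact (Complex.differentiable_exp.comp ((differentiable_const _).mul differentiable_id)).const_mul _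
  set g : ℂ → ℂ := fun w => f (φ w) with hg_def
  have hgd : DifferentiableOn ℂ g (φ ⁻¹' Ω) :=
    hf.comp hφdiff.differentiableOn (fun w hw => hw)
  have hstrip_sub : Complex.re ⁻¹' Set.Icc (0:ℝ) 1 ⊆ φ ⁻¹' Ω :=
    fun w hw => hsub (hmap w hw)
  have hd : DiffContOnCl ℂ g (Complex.HadamardThreeLines.verticalStrip 0 1) := by
    constructor
    · apply hgd.mono
      intro w hw
      exact hstrip_sub (Set.preimage_mono Set.Ioo_subset_Icc_self hw)
    · apply hgd.continuousOn.mono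
      refine (closure_minimal (Set.preimage_mono Set.Ioo_subset_Icc_self)
        (isClosed_Icc.preimage Complex.continuous_re)).trans hstrip_sub
  have hBg : BddAbove ((norm ∘ g) '' (Complex.HadamardThreeLines.verticalClosedStrip 0 1)) := by
    refine ⟨M, ?_⟩
    rintro _ ⟨w, hw, rfl⟩
    exact hM _ (hmap w hw)
  have ha' : ∀ w ∈ Complex.re ⁻¹' {(0:ℝ)}, ‖g w‖ ≤ M := by
    intro w hw
    refine hM _ ?_
    rw [Metric.mem_closedBall, hrad, Set.mem_preimage, Set.mem_singleton_iff] at *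
    rw [hw]
    simp
  have hb' : ∀ w ∈ Complex.re ⁻¹' {(1:ℝ)}, ‖g w‖ ≤ m := by
    intro w hw
    refine hm _ ?_
    rw [Metric.mem_sphere, hrad, Set.mem_preimage, Set.mem_singleton_iff] at *
    rw [hw, mul_one, hexpneg]
    field_simp
  -- case split on the location of z
  rcases le_or_gt (dist z a) r with hcase | hcase
  · -- z in the inner disk: use maximum modulus to get ‖f z‖ ≤ m
    have hball : Metric.closedBall a r ⊆ Ω := fun w hw =>
      hsub (Metric.closedBall_subset_closedBall hrR.le hw)
    have hdc : DiffContOnCl ℂ f (Metric.ball a r) := by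
      constructor
      · exact hf.mono ((Metric.ball_subset_closedBall).trans hball)
      · refine (hf.continuousOn.mono ?_)
        rw [closure_ball a hr.ne']
        exact hball
    have hfm : ‖f z‖ ≤ m := by
      refine Complex.norm_le_of_forall_mem_frontier_norm_le Metric.isBounded_ball hdc ?_ ?_
      · intro w hw
        rw [frontier_ball a hr.ne'] at hw
        exact hm w hw
      · rw [closure_ball a hr.ne']
        exact Metric.mem_closedBall.2 hcase
    refine hfm.trans ?_
    rcases hm0.eq_or_lt with h | h
    · rw [← h]
      have h1t : (0:ℝ) ≤ 1 - t ∨ (0:ℝ) < M := Or.inr hM0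
      positivity
    · have : m = m ^ t * m ^ (1 - t) := by
        rw [← Real.rpow_add h]; simp
      refine this.trans_le ?_
      exact mul_le_mul_of_nonneg_left
        (Real.rpow_le_rpow hm0 hmM (by linarith : (0:ℝ) ≤ 1 - t)) (Real.rpow_nonneg hm0 t)
  · -- z in the annulus: apply Hadamard three lines
    set ρ' : ℝ := dist z a with hρ'_def
    have hρ'ρ : ρ' ≤ ρ := Metric.mem_closedBall.1 hz
    have hρ'0 : 0 < ρ' := hr.trans hcase
    set t' : ℝ := Real.log (R / ρ') / s with ht'_def
    have ht'0 : 0 ≤ t' := div_nonneg (Real.log_nonneg ((one_le_div hρ'0).2 (hρ'ρ.trans hρR))) hs.le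
    have ht'1 : t' ≤ 1 := by
      rw [div_le_one hs]
      have : R / ρ' ≤ R / r := by gcongr
      exact Real.log_le_log (by positivity) this
    have htt' : t ≤ t' := by
      rw [ht_def, ht'_def]
      refine (div_le_div_iff_of_pos_right hs).2 (Real.log_le_log (by positivity) (by gcongr))
    set w₀ : ℂ := (t' : ℂ) + ((-(z - a).arg / s : ℝ) : ℂ) * Complex.I with hw₀_def
    have hre : w₀.re = t' := by simp [hw₀_def]
    have hkey : φ w₀ = z := by
      have hsne : (s:ℂ) ≠ 0 := Complex.ofReal_ne_zero.2 hs.ne'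
      have h1 : -(s:ℂ) * w₀ = ((-(s * t') : ℝ) : ℂ) + ((z - a).arg : ℂ) * Complex.I := by
        rw [hw₀_def]
        push_cast
        field_simp
        ring
      have h2 : Complex.exp (-(s:ℂ) * w₀)
          = (Real.exp (-(s * t')) : ℂ) * Complex.exp (((z - a).arg : ℂ) * Complex.I) := by
        rw [h1, Complex.exp_add, Complex.ofReal_exp]
      have h3 : R * Real.exp (-(s * t')) = ρ' := by
        have hst' : s * t' = Real.log (R / ρ') := by
          rw [ht'_def]; field_simp
        rw [hst', Real.exp_neg, Real.exp_log (by positivity)]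
        field_simp
      have h4 : (ρ' : ℂ) * Complex.exp (((z - a).arg : ℂ) * Complex.I) = z - a := by
        have : ρ' = ‖z - a‖ := by rw [hρ'_def, Complex.dist_eq]
        rw [this]
        exact Complex.norm_mul_exp_arg_mul_I (z - a)
      rw [hφ_def]
      simp only
      rw [h2, ← mul_assoc]
      rw [show ((R:ℂ) * (Real.exp (-(s * t')) : ℂ)) = ((R * Real.exp (-(s * t')) : ℝ) : ℂ) by push_cast; ring]
      rw [h3, h4]
      ring
    have hw₀strip : w₀ ∈ Complex.HadamardThreeLines.verticalClosedStrip 0 1 := by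
      simp only [Complex.HadamardThreeLines.verticalClosedStrip, Set.mem_preimage, hre]
      exact ⟨ht'0, ht'1⟩
    have := Complex.HadamardThreeLines.norm_le_interp_of_mem_verticalClosedStrip' zero_lt_one
      hw₀strip hd hBg ha' hb'
    rw [hre, sub_zero, sub_zero, div_one] at this
    have hgz : g w₀ = f z := by rw [hg_def]; simp only; rw [hkey]
    rw [hgz] at this
    calc ‖f z‖ ≤ M ^ (1 - t') * m ^ t' := this
      _ = m ^ t' * M ^ (1 - t') := mul_comm _ _
      _ ≤ m ^ t * M ^ (1 - t) := mono_rpow hm0 hmM hM0 ht0 htt' ht'1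

/-- Generalized three-sets Hadamard theorem. -/
theorem stmt_7 (Ω₁ Ω₂ Ω₃ : Set ℂ)
    (h₁open : IsOpen Ω₁) (h₂open : IsOpen Ω₂) (h₃open : IsOpen Ω₃)
    (h₁bdd : Bornology.IsBounded Ω₁) (h₂bdd : Bornology.IsBounded Ω₂)
    (h₃bdd : Bornology.IsBounded Ω₃)
    (h₁ne : Ω₁.Nonempty) (h₁₂ : Ω₁ ⊆ Ω₂) (h₂₃ : closure Ω₂ ⊆ Ω₃)
    (h₃sc : SimplyConnectedSpace Ω₃) :
    ∃ θ ∈ Set.Ioo (0:ℝ) 1, ∀ f : ℂ → ℂ, DifferentiableOn ℂ f Ω₃ →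
      (BddAbove ((fun z => ‖f z‖) '' Ω₃)) →
      (⨆ z ∈ Ω₂, ‖f z‖) ≤ (⨆ z ∈ Ω₁, ‖f z‖) ^ θ * (⨆ z ∈ Ω₃, ‖f z‖) ^ (1 - θ) := by
  obtain ⟨z₁, hz₁⟩ := h₁ne
  have h₁₃ : Ω₁ ⊆ Ω₃ := fun z hz => h₂₃ (subset_closure (h₁₂ hz))
  have h₂Ω₃ : Ω₂ ⊆ Ω₃ := fun z hz => h₂₃ (subset_closure hz)
  -- pointwise bounds by the suprema
  have hMub : ∀ f : ℂ → ℂ, BddAbove ((fun z => ‖f z‖) '' Ω₃) →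
      ∀ z ∈ Ω₃, ‖f z‖ ≤ ⨆ z ∈ Ω₃, ‖f z‖ := by
    intro f hB z hz
    obtain ⟨C, hC⟩ := hB
    exact le_sup2 (fun w hw => hC (Set.mem_image_of_mem _ hw)) hz
  have hmub : ∀ f : ℂ → ℂ, BddAbove ((fun z => ‖f z‖) '' Ω₃) →
      ∀ z ∈ Ω₁, ‖f z‖ ≤ ⨆ z ∈ Ω₁, ‖f z‖ := by
    intro f hB z hz
    obtain ⟨C, hC⟩ := hB
    exact le_sup2 (fun w hw => hC (Set.mem_image_of_mem _ (h₁₃ hw))) hz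
  have hm_le_M : ∀ f : ℂ → ℂ, BddAbove ((fun z => ‖f z‖) '' Ω₃) →
      (⨆ z ∈ Ω₁, ‖f z‖) ≤ ⨆ z ∈ Ω₃, ‖f z‖ := by
    intro f hB
    exact sup2_le (sup2_nonneg _ _) (fun z hz => hMub f hB z (h₁₃ hz))
  -- preconnectedness of Ω₃
  have hconn : IsPreconnected Ω₃ := by
    haveI := h₃sc
    haveI : PathConnectedSpace Ω₃ := inferInstance
    haveI : ConnectedSpace Ω₃ := inferInstance
    exact (isConnected_iff_connectedSpace.2 this).isPreconnected
  -- the good set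
  set A : Set ℂ := {z | ∃ θ ∈ Set.Ioc (0:ℝ) 1, ∃ δ > 0, Metric.ball z δ ⊆ Ω₃ ∧
    ∀ f : ℂ → ℂ, DifferentiableOn ℂ f Ω₃ → BddAbove ((fun z => ‖f z‖) '' Ω₃) →
      0 < (⨆ z ∈ Ω₃, ‖f z‖) →
      ∀ w ∈ Metric.ball z δ,
        ‖f w‖ ≤ (⨆ z ∈ Ω₁, ‖f z‖) ^ θ * (⨆ z ∈ Ω₃, ‖f z‖) ^ (1-θ)} with hA_def
  have hΩ₁A : Ω₁ ⊆ A := by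
    intro z hz
    obtain ⟨δ, hδ, hball⟩ := Metric.isOpen_iff.1 h₁open z hz
    refine ⟨1, ⟨zero_lt_one, le_refl 1⟩, δ, hδ, hball.trans h₁₃, ?_⟩
    intro f hf hB hM0 w hw
    rw [Real.rpow_one, sub_self, Real.rpow_zero, mul_one]
    exact hmub f hB w (hball hw)
  have hAopen : IsOpen A := by
    rw [Metric.isOpen_iff]
    rintro z ⟨θ, hθ, δ, hδ, hsub, hbd⟩
    refine ⟨δ, hδ, ?_⟩
    intro y hy
    refine ⟨θ, hθ, δ - dist y z, by simp [Metric.mem_ball] at hy; linarith, ?_, ?_⟩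
    · intro x hx
      apply hsub
      rw [Metric.mem_ball] at *
      have := dist_triangle x y z
      linarith
    · intro f hf hB hM0 w hw
      refine hbd f hf hB hM0 w ?_
      rw [Metric.mem_ball] at *
      have := dist_triangle w y z
      linarith
  have hAcl : Ω₃ ∩ closure A ⊆ A := by
    rintro z ⟨hzΩ, hzcl⟩
    obtain ⟨R₀, hR₀, hballΩ⟩ : ∃ R₀ > 0, Metric.closedBall z R₀ ⊆ Ω₃ := by
      obtain ⟨ε, hε, h⟩ := Metric.isOpen_iff.1 h₃open z hzΩ
      exact ⟨ε/2, by linarith, (Metric.closedBall_subset_ball (by linarith)).trans h⟩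
    obtain ⟨w, hwA, hwd⟩ := Metric.mem_closure_iff.1 hzcl (R₀/8) (by positivity)
    obtain ⟨θ, hθ, δ, hδ, hballsub, hbd⟩ := hwA
    set r : ℝ := min (δ/2) (R₀/8) with hr_def
    have hr : 0 < r := lt_min (by linarith) (by positivity)
    set R : ℝ := R₀/2 with hR_def
    set ρ : ℝ := R₀/4 with hρ_def
    have hrρ : r ≤ ρ := (min_le_right _ _).trans (by rw [hρ_def]; linarith)
    have hρR : ρ ≤ R := by rw [hρ_def, hR_def]; linarith
    have hrR : r < R := lt_of_le_of_lt (min_le_right _ _) (by rw [hR_def]; linarith)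
    set t : ℝ := Real.log (R/ρ) / Real.log (R/r) with ht_def
    have hlogRr : 0 < Real.log (R/r) := Real.log_pos ((one_lt_div hr).2 hrR)
    have ht0 : 0 < t := div_pos
      (Real.log_pos ((one_lt_div (by positivity)).2 (by rw [hρ_def, hR_def]; linarith))) hlogRr
    have ht1 : t ≤ 1 := by
      rw [ht_def, div_le_one hlogRr]
      exact Real.log_le_log (by positivity) (by gcongr)
    have hsubR : Metric.closedBall w R ⊆ Ω₃ := by
      intro x hx
      apply hballΩ
      rw [Metric.mem_closedBall] at *
      have h1 := dist_triangle x w z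
      have h2 : dist w z < R₀/8 := by rw [dist_comm]; exact hwd
      rw [hR_def] at hx
      linarith
    refine ⟨θ * t, ⟨mul_pos hθ.1 ht0, by nlinarith [hθ.1, hθ.2, ht0, ht1]⟩,
      R₀/8, by positivity, ?_, ?_⟩
    · intro x hx
      apply hballΩ
      rw [Metric.mem_ball] at hx
      rw [Metric.mem_closedBall]
      linarith
    · intro f hf hB hMpos w' hw'
      set m : ℝ := ⨆ z ∈ Ω₁, ‖f z‖ with hm_def
      set M : ℝ := ⨆ z ∈ Ω₃, ‖f z‖ with hM_def
      have hm0 : 0 ≤ m := sup2_nonneg _ _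
      have hmM : m ≤ M := hm_le_M f hB
      have hm'0 : (0:ℝ) ≤ m^θ * M^(1-θ) := by positivity
      have hm'M : m^θ * M^(1-θ) ≤ M := by
        calc m^θ * M^(1-θ) ≤ M^θ * M^(1-θ) :=
              mul_le_mul_of_nonneg_right (Real.rpow_le_rpow hm0 hmM hθ.1.le)
                (Real.rpow_nonneg hMpos.le _)
          _ = M := by rw [← Real.rpow_add hMpos]; simp
      have hsphere : ∀ x ∈ Metric.sphere w r, ‖f x‖ ≤ m^θ * M^(1-θ) := by
        intro x hx
        refine hbd f hf hB hMpos x ?_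
        rw [Metric.mem_sphere] at hx
        rw [Metric.mem_ball, hx]
        calc r ≤ δ/2 := min_le_left _ _
          _ < δ := by linarith
      have hw'ball : w' ∈ Metric.closedBall w ρ := by
        rw [Metric.mem_closedBall]
        have h1 := dist_triangle w' z w
        rw [Metric.mem_ball] at hw'
        rw [hρ_def]
        linarith
      have key := threeCircles hf hr hrρ hρR hrR h₃open hsubR hm'0 hm'M hMpos hsphere
        (fun x hx => hMub f hB x (hsubR hx)) hw'ball
      rw [← ht_def] at key
      refine key.trans (le_of_eq ?_)
      rw [Real.mul_rpow (Real.rpow_nonneg hm0 _) (Real.rpow_nonneg hMpos.le _),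
        ← Real.rpow_mul hm0, ← Real.rpow_mul hMpos.le, mul_assoc,
        ← Real.rpow_add hMpos, show (1-θ)*t + (1-t) = 1 - θ*t by ring]
  -- Ω₃ ⊆ A by connectedness
  have hΩ₃A : Ω₃ ⊆ A := by
    intro x hx
    by_contra hxA
    have hxB : x ∈ Ω₃ \ closure A := ⟨hx, fun hc => hxA (hAcl ⟨hx, hc⟩)⟩
    have hcover : Ω₃ ⊆ A ∪ (Ω₃ \ closure A) := by
      intro y hy
      by_cases hyc : y ∈ closure A
      · exact Or.inl (hAcl ⟨hy, hyc⟩)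
      · exact Or.inr ⟨hy, hyc⟩
    obtain ⟨y, _, hyA, hyB⟩ := hconn A (Ω₃ \ closure A) hAopen
      (h₃open.sdiff isClosed_closure) hcover ⟨z₁, h₁₃ hz₁, hΩ₁A hz₁⟩ ⟨x, hx, hxB⟩
    exact hyB.2 (subset_closure hyA)
  -- compactness of the closure of Ω₂
  have hK : IsCompact (closure Ω₂) :=
    Metric.isCompact_of_isClosed_isBounded isClosed_closure h₂bdd.closure
  have hKA : ∀ z ∈ closure Ω₂, ∃ p : ℝ × ℝ, p.1 ∈ Set.Ioc (0:ℝ) 1 ∧ 0 < p.2 ∧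
      (∀ f : ℂ → ℂ, DifferentiableOn ℂ f Ω₃ → BddAbove ((fun z => ‖f z‖) '' Ω₃) →
        0 < (⨆ z ∈ Ω₃, ‖f z‖) →
        ∀ w ∈ Metric.ball z p.2,
          ‖f w‖ ≤ (⨆ z ∈ Ω₁, ‖f z‖) ^ p.1 * (⨆ z ∈ Ω₃, ‖f z‖) ^ (1-p.1)) := by
    intro z hz
    obtain ⟨θ, hθ, δ, hδ, _, hbd⟩ := hΩ₃A (h₂₃ hz)
    exact ⟨(θ, δ), hθ, hδ, hbd⟩
  choose! p hp1 hp2 hp3 using hKA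
  have hcov : closure Ω₂ ⊆ ⋃ z ∈ closure Ω₂, Metric.ball z (p z).2 := by
    intro z hz
    exact Set.mem_biUnion hz (Metric.mem_ball_self (hp2 z hz))
  obtain ⟨b', hb'sub, hb'fin, hb'cov⟩ :=
    hK.elim_finite_subcover_image (fun i _ => Metric.isOpen_ball) hcov
  have hz₁K : z₁ ∈ closure Ω₂ := subset_closure (h₁₂ hz₁)
  obtain ⟨i₀, hi₀, _⟩ := Set.mem_iUnion₂.1 (hb'cov hz₁K)
  have hb'ne : hb'fin.toFinset.Nonempty := ⟨i₀, hb'fin.mem_toFinset.2 hi₀⟩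
  set θ₀ : ℝ := hb'fin.toFinset.inf' hb'ne (fun z => (p z).1) with hθ₀_def
  have hθ₀pos : 0 < θ₀ := by
    rw [hθ₀_def, Finset.lt_inf'_iff]
    intro i hi
    exact (hp1 i (hb'sub (hb'fin.mem_toFinset.1 hi))).1
  have hθ₀le1 : θ₀ ≤ 1 := by
    refine le_trans (Finset.inf'_le _ (hb'fin.mem_toFinset.2 hi₀)) ?_
    exact (hp1 i₀ (hb'sub hi₀)).2
  refine ⟨θ₀/2, ⟨by linarith, by linarith⟩, ?_⟩
  intro f hf hB
  set m : ℝ := ⨆ z ∈ Ω₁, ‖f z‖ with hm_def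
  set M : ℝ := ⨆ z ∈ Ω₃, ‖f z‖ with hM_def
  have hm0 : 0 ≤ m := sup2_nonneg _ _
  have hmM : m ≤ M := hm_le_M f hB
  by_cases hMpos : 0 < M
  · refine sup2_le (by positivity) ?_
    intro x hx
    obtain ⟨i, hi, hxi⟩ := Set.mem_iUnion₂.1 (hb'cov (subset_closure hx))
    have hbound := hp3 i (hb'sub hi) f hf hB hMpos x hxi
    refine hbound.trans ?_
    refine mono_rpow hm0 hmM hMpos (by linarith) ?_ (hp1 i (hb'sub hi)).2
    calc θ₀/2 ≤ θ₀ := by linarith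
      _ ≤ (p i).1 := Finset.inf'_le _ (hb'fin.mem_toFinset.2 hi)
  · have hM0 : M = 0 := le_antisymm (not_lt.1 hMpos) (sup2_nonneg _ _)
    have hfz : ∀ x ∈ Ω₂, ‖f x‖ ≤ 0 := by
      intro x hx
      have := hMub f hB x (h₂Ω₃ hx)
      rw [← hM_def] at this
      linarith [hM0 ▸ this]
    have hm0' : m = 0 := le_antisymm
      (sup2_le le_rfl (fun x hx => by
        have := hMub f hB x (h₁₃ hx); rw [← hM_def] at this; linarith [hM0 ▸ this]))
      hm0
    rw [hm0', hM0, Real.zero_rpow (by positivity : (0:ℝ) < θ₀/2).ne',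
      Real.zero_rpow (by linarith : (0:ℝ) < 1 - θ₀/2).ne', mul_zero]
    exact sup2_le le_rfl hfz
end

section
/- Let w be a weight function satisfying (δ): there exist C > 0 and A > 1 with 2·w(t) ≤ w(Ct) + log A for all t ≥ 0. Then the weight function system W_w = (w(Nt))_{N∈ℕ} satisfies (N): for every N there exists M ≥ N with ∫₀^∞ e^{w(Nt) − w(Mt)} dt < ∞. -/
open MeasureTheory Real Set

lemma aux_integrable (w : ℝ → ℝ)
    (hw_nonneg : ∀ t ≥ (0:ℝ), 0 ≤ w t)
    (hw_mono : MonotoneOn w (Set.Ici (0:ℝ)))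
    (hw_cont : ContinuousOn w (Set.Ici (0:ℝ)))
    (hw_unbdd : ∀ B : ℝ, ∃ t ≥ (0:ℝ), B < w t)
    (hδ : ∃ C > (0:ℝ), ∃ A > (1:ℝ), ∀ t ≥ (0:ℝ), 2 * w t ≤ w (C * t) + Real.log A) :
    MeasureTheory.IntegrableOn (fun t => Real.exp (-(w t))) (Set.Ioi (0:ℝ)) := by
  obtain ⟨C, hC, A, hA, hδ⟩ := hδ
  set C' : ℝ := max C 2 with hC'def
  have hC'2 : (2:ℝ) ≤ C' := le_max_right _ _
  have hC'1 : (1:ℝ) < C' := by linarith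
  have hlogC' : 0 < Real.log C' := Real.log_pos hC'1
  have hlogA : 0 < Real.log A := Real.log_pos hA
  have hδ' : ∀ t ≥ (0:ℝ), 2 * w t ≤ w (C' * t) + Real.log A := by
    intro t ht
    refine (hδ t ht).trans (add_le_add_left ?_ _)
    exact hw_mono (Set.mem_Ici.mpr (mul_nonneg hC.le ht))
      (Set.mem_Ici.mpr (mul_nonneg (by linarith) ht))
      (mul_le_mul_of_nonneg_right (le_max_left _ _) ht)
  obtain ⟨t₁, ht₁0, ht₁⟩ := hw_unbdd (Real.log A + 2 * Real.log C' + 1)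
  set t₀ : ℝ := max t₁ 1 with ht₀def
  have ht₀1 : (1:ℝ) ≤ t₀ := le_max_right _ _
  have ht₀pos : (0:ℝ) < t₀ := by linarith
  have hwt₀ : Real.log A + 2 * Real.log C' + 1 < w t₀ :=
    lt_of_lt_of_le ht₁ (hw_mono (Set.mem_Ici.mpr ht₁0) (Set.mem_Ici.mpr ht₀pos.le)
      (le_max_left _ _))
  set ε : ℝ := w t₀ - Real.log A with hεdef
  have hε : 2 * Real.log C' + 1 ≤ ε := by simp only [hεdef]; linarith
  have hεpos : 0 < ε := by linarith
  -- iterated growth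
  have claim : ∀ k : ℕ, 2 ^ k * ε + Real.log A ≤ w (C' ^ k * t₀) := by
    intro k
    induction k with
    | zero => simp [hεdef]
    | succ k ih =>
      have hpos : (0:ℝ) ≤ C' ^ k * t₀ := by positivity
      have h := hδ' (C' ^ k * t₀) hpos
      have heq : C' * (C' ^ k * t₀) = C' ^ (k + 1) * t₀ := by ring
      rw [heq] at h
      rw [show (2:ℝ) ^ (k + 1) * ε = 2 * (2 ^ k * ε) by ring]
      linarith
  -- logarithmic lower bound
  have growth : ∀ t, t₀ ≤ t → ε / Real.log C' * (Real.log t - Real.log t₀) ≤ w t := by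
    intro t ht
    have htpos : 0 < t := lt_of_lt_of_le ht₀pos ht
    set k : ℕ := ⌊Real.logb C' (t / t₀)⌋₊ with hkdef
    have hr1 : 1 ≤ t / t₀ := (one_le_div ht₀pos).2 ht
    have hrpos : 0 < t / t₀ := by linarith
    have hlb_nonneg : 0 ≤ Real.logb C' (t / t₀) := Real.logb_nonneg hC'1 hr1
    have hk_le : (k : ℝ) ≤ Real.logb C' (t / t₀) := Nat.floor_le hlb_nonneg
    have hk_lt : Real.logb C' (t / t₀) < (k : ℝ) + 1 := Nat.lt_floor_add_one _
    have hpow : C' ^ k ≤ t / t₀ := by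
      have h1 : (C':ℝ) ^ (k:ℝ) ≤ C' ^ (Real.logb C' (t / t₀)) :=
        Real.rpow_le_rpow_of_exponent_le hC'1.le hk_le
      rwa [Real.rpow_natCast, Real.rpow_logb (by linarith) (ne_of_gt hC'1) hrpos] at h1
    have h1 : C' ^ k * t₀ ≤ t := (le_div_iff₀ ht₀pos).1 hpow
    have h2 : w (C' ^ k * t₀) ≤ w t :=
      hw_mono (Set.mem_Ici.mpr (by positivity)) (Set.mem_Ici.mpr htpos.le) h1
    have h3 := claim k
    have h4 : (k : ℝ) + 1 ≤ 2 ^ k := by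
      exact_mod_cast Nat.succ_le_of_lt (Nat.lt_two_pow_self (n := k))
    have h5 : ε * Real.logb C' (t / t₀) ≤ ((k:ℝ) + 1) * ε := by nlinarith
    have h6 : ((k:ℝ) + 1) * ε ≤ 2 ^ k * ε := by nlinarith
    have h7 : ε / Real.log C' * (Real.log t - Real.log t₀) = ε * Real.logb C' (t / t₀) := by
      rw [Real.logb, Real.log_div (ne_of_gt htpos) (ne_of_gt ht₀pos)]
      field_simp
    nlinarith [h2, h3, h4, h5, h6, h7, hlogA]
  set β : ℝ := ε / Real.log C' with hβdef
  have hβ : 2 < β := by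
    rw [hβdef, lt_div_iff₀ hlogC']
    linarith
  set T : ℝ := max t₀ (Real.exp (β * Real.log t₀ / (β - 2))) with hTdef
  have hTt₀ : t₀ ≤ T := le_max_left _ _
  have hTpos : 0 < T := lt_of_lt_of_le ht₀pos hTt₀
  have hbound : ∀ t, T < t → 2 * Real.log t ≤ w t := by
    intro t ht
    have htpos : 0 < t := lt_trans hTpos ht
    have hexp : Real.exp (β * Real.log t₀ / (β - 2)) ≤ t :=
      le_trans (le_max_right _ _) ht.le
    have hlog : β * Real.log t₀ / (β - 2) ≤ Real.log t :=
      (Real.le_log_iff_exp_le htpos).2 hexp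
    have h1 : β * Real.log t₀ ≤ (β - 2) * Real.log t := by
      rw [div_le_iff₀ (by linarith)] at hlog
      linarith [hlog]
    have h2 := growth t (le_trans hTt₀ ht.le)
    linarith
  -- integrability on Ioi T
  have hcont : ContinuousOn (fun t => Real.exp (-(w t))) (Set.Ici (0:ℝ)) :=
    Real.continuous_exp.comp_continuousOn hw_cont.neg
  have hIoiT : MeasureTheory.IntegrableOn (fun t => Real.exp (-(w t))) (Set.Ioi T) := by
    have hg : MeasureTheory.IntegrableOn (fun t : ℝ => t ^ (-2 : ℝ)) (Set.Ioi T) :=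
      integrableOn_Ioi_rpow_of_lt (by norm_num) hTpos
    refine hg.mono' ?_ ?_
    · exact ((hcont.mono (fun x hx => Set.mem_Ici.mpr (le_of_lt (lt_trans hTpos hx)))).aestronglyMeasurable
        measurableSet_Ioi)
    · filter_upwards [MeasureTheory.ae_restrict_mem measurableSet_Ioi] with t ht
      have htT : T < t := ht
      have htpos : 0 < t := lt_trans hTpos htT
      have h1 : -(w t) ≤ -(2 * Real.log t) := by linarith [hbound t htT]
      have h2 : Real.exp (-(w t)) ≤ Real.exp (-(2 * Real.log t)) := Real.exp_le_exp.2 h1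
      have h3 : t ^ (-2 : ℝ) = Real.exp (-(2 * Real.log t)) := by
        rw [Real.rpow_def_of_pos htpos]; ring_nf
      rw [Real.norm_eq_abs, abs_of_pos (Real.exp_pos _), h3]
      exact h2
  have hIocT : MeasureTheory.IntegrableOn (fun t => Real.exp (-(w t))) (Set.Ioc 0 T) := by
    have h : MeasureTheory.IntegrableOn (fun t => Real.exp (-(w t))) (Set.Icc 0 T)
        MeasureTheory.volume :=
      (hcont.mono Set.Icc_subset_Ici_self).integrableOn_Icc
    exact h.mono_set Set.Ioc_subset_Icc_self
  have hsub : Set.Ioi (0:ℝ) ⊆ Set.Ioc 0 T ∪ Set.Ioi T := by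
    intro x hx
    rcases le_or_gt x T with h | h
    · exact Or.inl ⟨hx, h⟩
    · exact Or.inr h
  exact (hIocT.union hIoiT).mono_set hsub

/-- If a weight function `w` satisfies (δ), then the system `W_w = (w(N·t))`
satisfies (N). -/
theorem stmt_12 (w : ℝ → ℝ)
    (hw_nonneg : ∀ t ≥ (0:ℝ), 0 ≤ w t)
    (hw_mono : MonotoneOn w (Set.Ici (0:ℝ)))
    (hw_cont : ContinuousOn w (Set.Ici (0:ℝ)))
    (hw_unbdd : ∀ B : ℝ, ∃ t ≥ (0:ℝ), B < w t)
    (hδ : ∃ C > (0:ℝ), ∃ A > (1:ℝ), ∀ t ≥ (0:ℝ), 2 * w t ≤ w (C * t) + Real.log A) :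
    ∀ N : ℕ, ∃ M : ℕ, N ≤ M ∧ MeasureTheory.IntegrableOn
      (fun t => Real.exp (w (N * t) - w (M * t))) (Set.Ioi (0:ℝ)) := by
  have hkey := aux_integrable w hw_nonneg hw_mono hw_cont hw_unbdd hδ
  obtain ⟨C, hC, A, hA, hδ⟩ := hδ
  have hApos : (0:ℝ) < A := by linarith
  have hmeas : ∀ a b : ℝ, 0 ≤ a → 0 ≤ b →
      MeasureTheory.AEStronglyMeasurable (fun t => Real.exp (w (a * t) - w (b * t)))
        (MeasureTheory.volume.restrict (Set.Ioi (0:ℝ))) := by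
    intro a b ha hb
    refine ContinuousOn.aestronglyMeasurable ?_ measurableSet_Ioi
    refine ContinuousOn.mono ?_ (fun x hx => Set.mem_Ici.mpr (le_of_lt hx))
    refine Real.continuous_exp.comp_continuousOn (ContinuousOn.sub ?_ ?_)
    · exact hw_cont.comp (continuous_const.mul continuous_id).continuousOn
        (fun t ht => Set.mem_Ici.mpr (mul_nonneg ha (Set.mem_Ici.mp ht)))
    · exact hw_cont.comp (continuous_const.mul continuous_id).continuousOn
        (fun t ht => Set.mem_Ici.mpr (mul_nonneg hb (Set.mem_Ici.mp ht)))
  intro N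
  rcases Nat.eq_zero_or_pos N with hN | hN
  · subst hN
    refine ⟨1, Nat.zero_le _, ?_⟩
    have hg : MeasureTheory.IntegrableOn
        (fun t => Real.exp (w 0) * Real.exp (-(w t))) (Set.Ioi (0:ℝ)) :=
      hkey.const_mul _
    refine hg.mono' (hmeas 0 1 le_rfl zero_le_one |>.congr ?_) ?_
    · filter_upwards with t
      norm_num
    · filter_upwards [MeasureTheory.ae_restrict_mem measurableSet_Ioi] with t ht
      have : ((0:ℕ):ℝ) * t = 0 := by norm_num
      rw [Real.norm_eq_abs, abs_of_pos (Real.exp_pos _)]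
      push_cast
      rw [zero_mul, one_mul, ← Real.exp_add]
      apply Real.exp_le_exp.2
      linarith
  · set C' : ℝ := max C 2 with hC'def
    have hC'2 : (2:ℝ) ≤ C' := le_max_right _ _
    refine ⟨⌈C' * N⌉₊, ?_, ?_⟩
    · have h1 : (N:ℝ) ≤ C' * N := by nlinarith [Nat.cast_nonneg (α := ℝ) N]
      have h2 : (C':ℝ) * N ≤ (⌈C' * N⌉₊ : ℝ) := Nat.le_ceil _
      exact_mod_cast h1.trans h2
    · set M : ℕ := ⌈C' * N⌉₊ with hMdef
      have hg : MeasureTheory.IntegrableOn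
          (fun t => A * Real.exp (-(w t))) (Set.Ioi (0:ℝ)) := hkey.const_mul _
      refine hg.mono' (hmeas N M (Nat.cast_nonneg N) (Nat.cast_nonneg M)) ?_
      filter_upwards [MeasureTheory.ae_restrict_mem measurableSet_Ioi] with t ht
      have htpos : (0:ℝ) < t := ht
      have hNt : (0:ℝ) ≤ (N:ℝ) * t := by positivity
      have h1 := hδ ((N:ℝ) * t) hNt
      have h2 : w (C * ((N:ℝ) * t)) ≤ w ((M:ℝ) * t) := by
        apply hw_mono (Set.mem_Ici.mpr (by positivity)) (Set.mem_Ici.mpr (by positivity))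
        have hCM : C * (N:ℝ) ≤ (M:ℝ) := by
          refine le_trans ?_ (Nat.le_ceil _)
          nlinarith [Nat.cast_nonneg (α := ℝ) N, le_max_left C 2]
        nlinarith
      have h3 : w t ≤ w ((N:ℝ) * t) := by
        apply hw_mono (Set.mem_Ici.mpr htpos.le) (Set.mem_Ici.mpr hNt)
        have hN1 : (1:ℝ) ≤ (N:ℝ) := by exact_mod_cast hN
        nlinarith
      rw [Real.norm_eq_abs, abs_of_pos (Real.exp_pos _)]
      calc Real.exp (w ((N:ℝ) * t) - w ((M:ℝ) * t))
          ≤ Real.exp (Real.log A - w t) := Real.exp_le_exp.2 (by linarith)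
        _ = A * Real.exp (-(w t)) := by
            rw [Real.exp_sub, Real.exp_log hApos, Real.exp_neg]
            ring
end

section
/- Let 0 < a < 1 and b ∈ ℝ, or a = 0 and b > 1, and let w be a weight function with w(t) = exp(t^a·(log(e+t))^b) for all sufficiently large t. Then w satisfies (δ) and (ε)₀ (for every μ > 0, ∫₀^∞ w(t)e^{−μt} dt < ∞), but w does not satisfy (α): there are no C > 0, A > 1 with w(2t) ≤ C·w(t) + log A for all t ≥ 0. -/
open Real Filter MeasureTheory Set

namespace Stmt15Aux

noncomputable def L (t : ℝ) : ℝ := Real.log (Real.exp 1 + t)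

lemma hL1 {t : ℝ} (ht : 0 ≤ t) : 1 ≤ L t := by
  have : Real.log (Real.exp 1) ≤ Real.log (Real.exp 1 + t) :=
    Real.log_le_log (Real.exp_pos 1) (by linarith)
  simpa [L, Real.log_exp] using this

lemma hLtop : Tendsto L atTop atTop :=
  Real.tendsto_log_atTop.comp (tendsto_atTop_add_const_left _ _ tendsto_id)

lemma hLdiff {t : ℝ} (ht : 0 ≤ t) : L (2 * t) - L t ≤ 1 := by
  have h1 : L (2 * t) ≤ Real.log 2 + L t := by
    have : Real.exp 1 + 2 * t ≤ 2 * (Real.exp 1 + t) := by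
      have := Real.exp_pos 1; linarith
    have h2 : L (2 * t) ≤ Real.log (2 * (Real.exp 1 + t)) :=
      Real.log_le_log (by positivity) this
    rwa [Real.log_mul (by norm_num) (by positivity)] at h2
  have h2 : Real.log 2 ≤ 1 := by
    rw [show (1:ℝ) = Real.log (Real.exp 1) by rw [Real.log_exp]]
    exact Real.log_le_log (by norm_num) (by have := Real.exp_one_gt_d9; linarith)
  linarith

lemma hLdiff0 {t : ℝ} (ht : 0 ≤ t) : 0 ≤ L (2 * t) - L t := by
  have : L t ≤ L (2 * t) := Real.log_le_log (by positivity) (by linarith)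
  linarith

lemma hLratio : Tendsto (fun t => L (2 * t) / L t) atTop (nhds 1) := by
  have h0 : Tendsto (fun t => L (2 * t) / L t - 1) atTop (nhds 0) := by
    apply squeeze_zero_norm' (a := fun t => 1 / L t)
    · filter_upwards [eventually_ge_atTop (0:ℝ)] with t ht
      have hL := hL1 ht
      have hLpos : (0:ℝ) < L t := by linarith
      have heq : L (2 * t) / L t - 1 = (L (2 * t) - L t) / L t := by
        field_simp
      have hnn : 0 ≤ (L (2 * t) - L t) / L t := div_nonneg (hLdiff0 ht) hLpos.le
      rw [heq, Real.norm_eq_abs, abs_of_nonneg hnn]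
      gcongr
      linarith [hLdiff ht]
    · simpa [one_div, Function.comp_def] using tendsto_inv_atTop_zero.comp hLtop
  have h1 := h0.add_const 1
  simp only [sub_add_cancel, zero_add] at h1
  exact h1

lemma helperP (c : ℝ) {s : ℝ} (hs : 0 < s) : ∀ᶠ t in atTop, L t ^ c ≤ t ^ s := by
  rcases le_or_gt c 0 with hc | hc
  · filter_upwards [eventually_ge_atTop (1:ℝ)] with t ht
    have h1 : L t ^ c ≤ 1 := Real.rpow_le_one_of_one_le_of_nonpos (hL1 (by linarith)) hc
    have h2 : (1:ℝ) ≤ t ^ s := by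
      calc (1:ℝ) = 1 ^ s := (Real.one_rpow s).symm
      _ ≤ t ^ s := Real.rpow_le_rpow (by norm_num) ht hs.le
    linarith
  · have ho := (isLittleO_log_rpow_rpow_atTop c hs).bound
      (c := ((2:ℝ) ^ c)⁻¹) (by positivity)
    filter_upwards [ho, eventually_ge_atTop (3:ℝ)] with t ht3 ht
    have ht1 : (1:ℝ) ≤ t := by linarith
    have hlog : 0 ≤ Real.log t := Real.log_nonneg ht1
    have hLle : L t ≤ 2 * Real.log t := by
      have h1 : Real.exp 1 + t ≤ t ^ (2:ℕ) := by
        have := Real.exp_one_lt_d9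
        nlinarith
      have h2 : L t ≤ Real.log (t ^ (2:ℕ)) :=
        Real.log_le_log (by positivity) h1
      rwa [Real.log_pow] at h2 <;> push_cast at h2 ⊢ <;> linarith
    have h3 : L t ^ c ≤ (2 * Real.log t) ^ c := by
      have hLnn : 0 ≤ L t := le_trans zero_le_one (hL1 (by linarith))
      exact Real.rpow_le_rpow hLnn hLle hc.le
    have h4 : (2 * Real.log t) ^ c = 2 ^ c * Real.log t ^ c :=
      Real.mul_rpow (by norm_num) hlog
    have h5 : ‖Real.log t ^ c‖ ≤ ((2:ℝ)^c)⁻¹ * ‖t ^ s‖ := ht3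
    rw [Real.norm_eq_abs, Real.norm_eq_abs, abs_of_nonneg (by positivity),
      abs_of_nonneg (by positivity)] at h5
    have h2c : (0:ℝ) < 2 ^ c := by positivity
    calc L t ^ c ≤ 2 ^ c * Real.log t ^ c := by rw [← h4]; exact h3
    _ ≤ 2 ^ c * (((2:ℝ)^c)⁻¹ * t ^ s) := by gcongr
    _ = t ^ s := by field_simp

lemma hphitop {a : ℝ} (b : ℝ) (ha : 0 < a) :
    Tendsto (fun t => t ^ a * L t ^ b) atTop atTop := by
  apply tendsto_atTop_mono' atTop (f₁ := fun t => t ^ (a/2))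
  · filter_upwards [helperP (-b) (by linarith : (0:ℝ) < a/2), eventually_ge_atTop (1:ℝ)]
      with t hP ht1
    have ht0 : (0:ℝ) < t := by linarith
    have hLpos : (0:ℝ) < L t := lt_of_lt_of_le one_pos (hL1 ht0.le)
    have htpow : (0:ℝ) < t ^ (a/2) := Real.rpow_pos_of_pos ht0 _
    have hLb : t ^ (-(a/2)) ≤ L t ^ b := by
      have h1 : L t ^ (-b) ≤ t ^ (a/2) := hP
      have h2 : (t ^ (a/2))⁻¹ ≤ (L t ^ (-b))⁻¹ :=
        inv_anti₀ (Real.rpow_pos_of_pos hLpos _) h1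
      rwa [← Real.rpow_neg ht0.le, ← Real.rpow_neg hLpos.le, neg_neg] at h2
    calc t ^ (a/2) = t ^ a * t ^ (-(a/2)) := by
          rw [← Real.rpow_add ht0]; ring_nf
    _ ≤ t ^ a * L t ^ b := by gcongr
  · exact tendsto_rpow_atTop (by linarith)

lemma hD {a b : ℝ} (hab : (0 < a ∧ a < 1) ∨ (a = 0 ∧ 1 < b)) :
    Tendsto (fun t => (2*t) ^ a * L (2*t) ^ b - t ^ a * L t ^ b) atTop atTop := by
  rcases hab with ⟨ha0, _⟩ | ⟨ha, hb⟩
  · -- case 0 < a : φ(2t) - φ(t) = φ(t) * (2^a * (L(2t)/L t)^b - 1)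
    have hfac : Tendsto (fun t => 2 ^ a * (L (2*t) / L t) ^ b - 1) atTop
        (nhds (2 ^ a - 1)) := by
      have h1 : Tendsto (fun t => (L (2*t) / L t) ^ b) atTop (nhds 1) := by
        have := hLratio.rpow_const (p := b) (Or.inl one_ne_zero)
        simpa using this
      have := (tendsto_const_nhds (x := (2:ℝ)^a)).mul h1
      simpa using this.sub_const 1
    have hpos : (0:ℝ) < 2 ^ a - 1 := by
      have : (1:ℝ) < 2 ^ a :=
        Real.one_lt_rpow_iff_of_pos (by norm_num) |>.mpr (Or.inl ⟨one_lt_two, ha0⟩)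
      linarith
    have hmul := (hphitop b ha0).atTop_mul_pos hpos hfac
    apply hmul.congr'
    filter_upwards [eventually_ge_atTop (1:ℝ)] with t ht1
    have ht0 : (0:ℝ) < t := by linarith
    have hLpos : (0:ℝ) < L t := lt_of_lt_of_le one_pos (hL1 ht0.le)
    have hL2nn : (0:ℝ) ≤ L (2*t) := le_trans zero_le_one (hL1 (by linarith))
    have h2t : ((2:ℝ)*t) ^ a = 2 ^ a * t ^ a := Real.mul_rpow (by norm_num) ht0.le
    have hdiv : (L (2*t) / L t) ^ b = L (2*t) ^ b / L t ^ b :=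
      Real.div_rpow hL2nn hLpos.le b
    have hLbne : L t ^ b ≠ 0 := (Real.rpow_pos_of_pos hLpos b).ne'
    rw [h2t, hdiv]
    field_simp
  · -- case a = 0, 1 < b
    subst ha
    have hlb : Tendsto (fun t => (b * Real.log (3/2)) * L t ^ (b-1)) atTop atTop := by
      apply Tendsto.const_mul_atTop
      · have : (0:ℝ) < Real.log (3/2) := Real.log_pos (by norm_num)
        positivity
      · exact (tendsto_rpow_atTop (by linarith : (0:ℝ) < b - 1)).comp hLtop
    apply tendsto_atTop_mono' atTop _ hlb
    filter_upwards [eventually_ge_atTop (3:ℝ)] with t ht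
    have ht0 : (0:ℝ) < t := by linarith
    have hLpos : (0:ℝ) < L t := lt_of_lt_of_le one_pos (hL1 ht0.le)
    have hL2 : L t ≤ L (2*t) := Real.log_le_log (by positivity) (by linarith)
    have hdiff : Real.log (3/2) ≤ L (2*t) - L t := by
      have h1 : (3/2 : ℝ) * (Real.exp 1 + t) ≤ Real.exp 1 + 2*t := by
        have := Real.exp_one_lt_d9; nlinarith
      have h2 : Real.log ((3/2) * (Real.exp 1 + t)) ≤ L (2*t) :=
        Real.log_le_log (by positivity) h1
      rw [Real.log_mul (by norm_num) (by positivity)] at h2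
      simp only [L] at h2 ⊢; linarith
    -- Bernoulli : (L2t/Lt)^b ≥ 1 + b * (L2t/Lt - 1)
    have hs : (-1:ℝ) ≤ L (2*t) / L t - 1 := by
      have : (1:ℝ) ≤ L (2*t) / L t := (one_le_div hLpos).mpr hL2
      linarith
    have hbern := one_add_mul_self_le_rpow_one_add hs hb.le
    have hrw : (1 + (L (2*t) / L t - 1)) = L (2*t) / L t := by ring
    rw [hrw] at hbern
    have hLb : (0:ℝ) < L t ^ b := Real.rpow_pos_of_pos hLpos b
    have hdivpow : (L (2*t) / L t) ^ b = L (2*t) ^ b / L t ^ b :=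
      Real.div_rpow (by linarith) hLpos.le b
    rw [hdivpow] at hbern
    -- multiply by L t ^ b
    have hkey : L t ^ b + b * ((L (2*t) - L t) / L t) * L t ^ b ≤ L (2*t) ^ b := by
      have := mul_le_mul_of_nonneg_right hbern hLb.le
      rw [div_mul_cancel₀ _ hLb.ne'] at this
      calc L t ^ b + b * ((L (2*t) - L t) / L t) * L t ^ b
          = (1 + b * (L (2*t) / L t - 1)) * L t ^ b := by
            rw [sub_div, div_self hLpos.ne']; ring
      _ ≤ L (2*t) ^ b := this
    have hpow1 : L t ^ (b-1) = L t ^ b / L t := by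
      rw [Real.rpow_sub hLpos, Real.rpow_one]
    have hb0 : (0:ℝ) < b := by linarith
    have hmid : b * Real.log (3/2) * L t ^ (b-1) ≤
        b * ((L (2*t) - L t) / L t) * L t ^ b := by
      rw [hpow1]
      rw [show b * ((L (2*t) - L t) / L t) * L t ^ b
          = b * (L (2*t) - L t) * (L t ^ b / L t) by ring,
        show b * Real.log (3/2) * (L t ^ b / L t)
          = b * Real.log (3/2) * (L t ^ b / L t) from rfl]
      have hq : (0:ℝ) ≤ L t ^ b / L t := by positivity
      have : b * Real.log (3/2) ≤ b * (L (2*t) - L t) := by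
        apply mul_le_mul_of_nonneg_left hdiff hb0.le
      exact mul_le_mul_of_nonneg_right this hq
    have hphi : ∀ u : ℝ, 0 < u → u ^ (0:ℝ) * L u ^ b = L u ^ b := by
      intro u hu; rw [Real.rpow_zero, one_mul]
    rw [hphi t ht0, hphi (2*t) (by linarith)]
    linarith

lemma hEps {a : ℝ} (b : ℝ) (ha0 : 0 ≤ a) (ha1 : a < 1) {μ : ℝ} (hμ : 0 < μ) :
    ∀ᶠ t in atTop, t ^ a * L t ^ b ≤ (μ/2) * t := by
  have hs : (0:ℝ) < (1-a)/2 := by linarith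
  have hsmall : Tendsto (fun t : ℝ => t ^ (-((1-a)/2))) atTop (nhds 0) :=
    tendsto_rpow_neg_atTop hs
  have hev : ∀ᶠ t in atTop, t ^ (-((1-a)/2)) ≤ μ/2 :=
    (hsmall.eventually (eventually_le_nhds (by positivity : (0:ℝ) < μ/2))).mono
      (fun t ht => ht)
  filter_upwards [helperP b hs, hev, eventually_ge_atTop (1:ℝ)] with t hP ht2 ht1
  have ht0 : (0:ℝ) < t := by linarith
  have h1 : t ^ a * L t ^ b ≤ t ^ a * t ^ ((1-a)/2) := by
    gcongr
  have h2 : t ^ a * t ^ ((1-a)/2) = t * t ^ (-((1-a)/2)) := by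
    have e1 : t * t ^ (-((1-a)/2)) = t ^ (1 + -((1-a)/2)) := by
      rw [Real.rpow_add ht0, Real.rpow_one]
    rw [e1, ← Real.rpow_add ht0]
    congr 1; ring
  have h3 : t * t ^ (-((1-a)/2)) ≤ t * (μ/2) := by
    gcongr
  calc t ^ a * L t ^ b ≤ t * t ^ (-((1-a)/2)) := by rw [← h2]; exact h1
  _ ≤ t * (μ/2) := h3
  _ = (μ/2) * t := by ring

end Stmt15Aux

open Stmt15Aux

/-- A weight function equal to `exp(t^a (log(e+t))^b)` for large `t`, with
`0 < a < 1` (any `b`) or `a = 0`, `b > 1`, satisfies (δ) and (ε)₀ but not (α). -/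
theorem stmt_15 (w : ℝ → ℝ) (a b : ℝ)
    (hab : (0 < a ∧ a < 1) ∨ (a = 0 ∧ 1 < b))
    (hw_nonneg : ∀ t ≥ (0:ℝ), 0 ≤ w t)
    (hw_mono : MonotoneOn w (Set.Ici (0:ℝ)))
    (hw_cont : ContinuousOn w (Set.Ici (0:ℝ)))
    (hw_unbdd : ∀ B : ℝ, ∃ t ≥ (0:ℝ), B < w t)
    (hw_eq : ∃ T : ℝ, ∀ t ≥ T,
      w t = Real.exp (t ^ a * (Real.log (Real.exp 1 + t)) ^ b)) :
    (∃ C > (0:ℝ), ∃ A > (1:ℝ), ∀ t ≥ (0:ℝ), 2 * w t ≤ w (C * t) + Real.log A) ∧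
    (∀ μ > (0:ℝ), MeasureTheory.IntegrableOn
        (fun t => w t * Real.exp (-μ * t)) (Set.Ioi (0:ℝ))) ∧
    ¬ (∃ C > (0:ℝ), ∃ A > (1:ℝ), ∀ t ≥ (0:ℝ), w (2 * t) ≤ C * w t + Real.log A) := by
  obtain ⟨T, hT⟩ := hw_eq
  have hTeq : ∀ t ≥ T, w t = Real.exp (t ^ a * L t ^ b) := hT
  have hDD := Stmt15Aux.hD hab
  have ha0 : 0 ≤ a := by rcases hab with ⟨h, _⟩ | ⟨h, _⟩ <;> linarith [h]
  have ha1 : a < 1 := by rcases hab with ⟨_, h⟩ | ⟨h, _⟩ <;> linarith [h]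
  refine ⟨?_, ?_, ?_⟩
  · -- (δ)
    obtain ⟨T₁, hT₁⟩ := eventually_atTop.mp (hDD.eventually_ge_atTop (Real.log 2))
    set T₂ : ℝ := max (max T₁ T) 1 with hT₂def
    have hT₂1 : (1:ℝ) ≤ T₂ := le_max_right _ _
    have hT₂0 : (0:ℝ) ≤ T₂ := by linarith
    have hkey : ∀ t ≥ T₂, 2 * w t ≤ w (2 * t) := by
      intro t ht
      have ht1 : (1:ℝ) ≤ t := le_trans hT₂1 ht
      have htT : T ≤ t := le_trans (le_trans (le_max_right T₁ T) (le_max_left _ _)) ht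
      have ht2T : T ≤ 2 * t := by linarith
      have htT₁ : T₁ ≤ t := le_trans (le_trans (le_max_left T₁ T) (le_max_left _ _)) ht
      rw [hTeq t htT, hTeq (2*t) ht2T]
      have h1 := hT₁ t htT₁
      have h2 : Real.exp (Real.log 2 + t ^ a * L t ^ b)
          ≤ Real.exp ((2*t) ^ a * L (2*t) ^ b) := Real.exp_le_exp.mpr (by linarith)
      rwa [Real.exp_add, Real.exp_log two_pos] at h2
    have hwT₂ : 0 ≤ w T₂ := hw_nonneg T₂ hT₂0
    refine ⟨2, two_pos, Real.exp (2 * w T₂ + 1), ?_, ?_⟩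
    · exact Real.one_lt_exp_iff.mpr (by linarith)
    · intro t ht
      have hlogA : Real.log (Real.exp (2 * w T₂ + 1)) = 2 * w T₂ + 1 := Real.log_exp _
      have hw2t0 : 0 ≤ w (2 * t) := hw_nonneg _ (by linarith)
      rcases le_total t T₂ with h | h
      · have := hw_mono (mem_Ici.mpr ht) (mem_Ici.mpr hT₂0) h
        rw [hlogA]; linarith
      · have := hkey t h
        rw [hlogA]; linarith
  · -- (ε)₀
    intro μ hμ
    obtain ⟨M₀, hM₀⟩ := eventually_atTop.mp (Stmt15Aux.hEps b ha0 ha1 hμ)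
    set M : ℝ := max (max M₀ T) 1 with hMdef
    have hM1 : (1:ℝ) ≤ M := le_max_right _ _
    have hM0 : (0:ℝ) ≤ M := by linarith
    have hcont : ContinuousOn (fun t => w t * Real.exp (-μ * t)) (Set.Ici 0) :=
      hw_cont.mul ((Real.continuous_exp.comp (continuous_const.mul continuous_id)).continuousOn)
    have h1 : MeasureTheory.IntegrableOn (fun t => w t * Real.exp (-μ * t))
        (Set.Ioc 0 M) := by
      exact ((hcont.mono Set.Icc_subset_Ici_self).integrableOn_Icc).mono_set
        Set.Ioc_subset_Icc_self
    have h2 : MeasureTheory.IntegrableOn (fun t => w t * Real.exp (-μ * t))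
        (Set.Ioi M) := by
      have hmeas : MeasureTheory.AEStronglyMeasurable (fun t => w t * Real.exp (-μ * t))
          (MeasureTheory.volume.restrict (Set.Ioi M)) :=
        (hcont.mono (fun x hx => le_trans hM0 (le_of_lt hx))).aestronglyMeasurable
          measurableSet_Ioi
      apply MeasureTheory.Integrable.mono'
        (exp_neg_integrableOn_Ioi M (half_pos hμ)) hmeas
      rw [MeasureTheory.ae_restrict_iff' measurableSet_Ioi]
      filter_upwards with t ht
      have htM : M < t := ht
      have ht1 : (1:ℝ) ≤ t := le_trans hM1 htM.le
      have htT : T ≤ t := le_trans (le_trans (le_max_right M₀ T) (le_max_left _ _)) htM.le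
      have htM₀ : M₀ ≤ t := le_trans (le_trans (le_max_left M₀ T) (le_max_left _ _)) htM.le
      have hb := hM₀ t htM₀
      have hwnn : 0 ≤ w t := hw_nonneg t (by linarith)
      rw [Real.norm_eq_abs, abs_of_nonneg (mul_nonneg hwnn (Real.exp_nonneg _))]
      rw [hTeq t htT, ← Real.exp_add]
      exact Real.exp_le_exp.mpr (by simp only [L] at hb ⊢; linarith)
    have := h1.union h2
    rwa [Set.Ioc_union_Ioi_eq_Ioi hM0] at this
  · -- ¬ (α)
    rintro ⟨C, hC, A, hA, hcon⟩
    obtain ⟨T₃, hT₃⟩ := eventually_atTop.mp (hDD.eventually_ge_atTop (Real.log (C + 2)))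
    obtain ⟨t₀, ht₀0, ht₀⟩ := hw_unbdd (max (Real.log A) 1)
    set t : ℝ := max (max T₃ t₀) (max T 1) with htdef
    have ht1 : (1:ℝ) ≤ t := le_trans (le_max_right T 1) (le_max_right _ _)
    have ht0 : (0:ℝ) ≤ t := by linarith
    have htT : T ≤ t := le_trans (le_max_left T 1) (le_max_right _ _)
    have htT₃ : T₃ ≤ t := le_trans (le_max_left T₃ t₀) (le_max_left _ _)
    have htt₀ : t₀ ≤ t := le_trans (le_max_right T₃ t₀) (le_max_left _ _)
    have hwt : max (Real.log A) 1 < w t :=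
      lt_of_lt_of_le ht₀ (hw_mono (mem_Ici.mpr ht₀0) (mem_Ici.mpr ht0) htt₀)
    have hlogA : 0 < Real.log A := Real.log_pos hA
    have hw2 : (C + 2) * w t ≤ w (2 * t) := by
      rw [hTeq t htT, hTeq (2*t) (by linarith)]
      have h1 := hT₃ t htT₃
      have h2 : Real.exp (Real.log (C+2) + t ^ a * L t ^ b)
          ≤ Real.exp ((2*t) ^ a * L (2*t) ^ b) := Real.exp_le_exp.mpr (by linarith)
      rwa [Real.exp_add, Real.exp_log (by linarith)] at h2
    have hcont := hcon t ht0
    have hwtA : Real.log A < w t := lt_of_le_of_lt (le_max_left _ _) hwt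
    linarith
end
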